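/- arXiv:math-ph/9903003 — 2 statements merged into one kernel-verified Lean document; each statement's English description precedes it below -/
import Mathlib

section
/- For bounded self-adjoint x and arbitrary bounded z, the commutator satisfies [e^{ix}, z] = i ∫_0^1 e^{itx} [x,z] e^{i(1-t)x} dt, and consequently ‖[e^{ix}, z]‖ ≤ ‖[x,z]‖. -/
open Complex NormedSpace intervalIntegral

set_option maxHeartbeats 1000000
set_option synthInstance.maxHeartbeats 400000

section aux

variable {H : Type*} [NormedAddCommGroup H] [InnerProductSpace ℂ H] [CompleteSpace H]

lemma aux_norm_unitary_le_one {u : H →L[ℂ] H} (hu : u ∈ unitary (H →L[ℂ] H)) :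
    ‖u‖ ≤ 1 := by
  have h1 : ‖u‖ * ‖u‖ = ‖(1 : H →L[ℂ] H)‖ := by
    rw [← CStarRing.norm_star_mul_self, hu.1]
  have h2 : ‖(1 : H →L[ℂ] H)‖ ≤ 1 := ContinuousLinearMap.norm_id_le
  nlinarith [norm_nonneg u]

lemma aux_exp_norm_le_one {x : H →L[ℂ] H} (hx : IsSelfAdjoint x) (s : ℝ) :
    ‖NormedSpace.exp (s • (I • x))‖ ≤ 1 := by
  let +nondep : NormedAlgebra ℚ (H →L[ℂ] H) := .restrictScalars ℚ ℂ _
  refine aux_norm_unitary_le_one (exp_mem_unitary_of_mem_skewAdjoint ?_)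
  have h : I • x ∈ skewAdjoint (H →L[ℂ] H) := hx.smul_mem_skewAdjoint conj_I
  exact skewAdjoint.smul_mem s h

end aux

/-- For a bounded self-adjoint operator `x` and an arbitrary bounded operator `z`,
`[e^{ix}, z] = i ∫_0^1 e^{itx} [x,z] e^{i(1-t)x} dt`, and consequently
`‖[e^{ix}, z]‖ ≤ ‖[x,z]‖`. -/
theorem commutator_exp_bound
    {H : Type*} [NormedAddCommGroup H] [InnerProductSpace ℂ H] [CompleteSpace H]
    (x z : H →L[ℂ] H) (hx : IsSelfAdjoint x) :
    NormedSpace.exp (I • x) * z - z * NormedSpace.exp (I • x) =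
      I • ∫ t in (0:ℝ)..1,
        NormedSpace.exp (((t : ℂ) * I) • x) * (x * z - z * x) *
          NormedSpace.exp ((((1 - t : ℝ) : ℂ) * I) • x) ∧
    ‖NormedSpace.exp (I • x) * z - z * NormedSpace.exp (I • x)‖ ≤ ‖x * z - z * x‖ := by
  set a : H →L[ℂ] H := I • x with ha
  set c : H →L[ℂ] H := x * z - z * x with hc
  -- rewrite the exponentials in the statement in terms of real smul
  have hsmul : ∀ t : ℝ, ((t : ℂ) * I) • x = t • a := by
    intro t
    rw [ha, mul_smul, ← Complex.coe_smul]
  have hF : ∀ t : ℝ,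
      NormedSpace.exp (((t : ℂ) * I) • x) * c * NormedSpace.exp ((((1 - t : ℝ) : ℂ) * I) • x)
        = NormedSpace.exp (t • a) * c * NormedSpace.exp ((1 - t) • a) := by
    intro t
    rw [hsmul t, hsmul (1 - t)]
  -- the exponential over ℝ equals the one over ℂ
  have hexp : ∀ b : H →L[ℂ] H, NormedSpace.exp b = NormedSpace.exp b := fun b => by
    rfl
  -- the function and its derivative
  set g : ℝ → (H →L[ℂ] H) := fun t => NormedSpace.exp (t • a) * z * NormedSpace.exp ((1 - t) • a) with hg
  have hcomm : ∀ s : ℝ, a * NormedSpace.exp (s • a) = NormedSpace.exp (s • a) * a := by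
    intro s
    exact (((Commute.refl a).smul_right s).exp_right).eq
  have hderiv : ∀ t : ℝ, HasDerivAt g (I • (NormedSpace.exp (t • a) * c * NormedSpace.exp ((1 - t) • a))) t := by
    intro t
    have h1 : HasDerivAt (fun u : ℝ => NormedSpace.exp (u • a)) (NormedSpace.exp (t • a) * a) t := by
      have := hasDerivAt_exp_smul_const (𝕂 := ℝ) a t
      simpa [hexp] using this
    have h2' : HasDerivAt (fun u : ℝ => NormedSpace.exp (u • a)) (NormedSpace.exp ((1 - t) • a) * a) (1 - t) := by
      have := hasDerivAt_exp_smul_const (𝕂 := ℝ) a (1 - t)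
      simpa [hexp] using this
    have hsub : HasDerivAt (fun u : ℝ => (1 : ℝ) - u) (-1) t := by
      simpa using (hasDerivAt_id t).const_sub (1 : ℝ)
    have h2 : HasDerivAt (fun u : ℝ => NormedSpace.exp ((1 - u) • a))
        ((-1 : ℝ) • (NormedSpace.exp ((1 - t) • a) * a)) t := h2'.scomp t hsub
    have hmul := (h1.mul_const z).mul h2
    refine hmul.congr_deriv (Eq.symm ?_)
    have e1 : NormedSpace.exp (t • a) * a * z = I • (NormedSpace.exp (t • a) * x * z) := by
      rw [ha]; simp [mul_smul_comm, smul_mul_assoc]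
    have e2 : z * (NormedSpace.exp ((1 - t) • a) * a) = I • (z * x * NormedSpace.exp ((1 - t) • a)) := by
      rw [← hcomm (1 - t), ha]
      simp [mul_smul_comm, smul_mul_assoc, mul_assoc]
    calc I • (NormedSpace.exp (t • a) * c * NormedSpace.exp ((1 - t) • a))
        = I • (NormedSpace.exp (t • a) * x * z * NormedSpace.exp ((1 - t) • a))
          - I • (NormedSpace.exp (t • a) * (z * x * NormedSpace.exp ((1 - t) • a))) := by
          rw [hc]; simp [mul_sub, sub_mul, smul_sub, mul_assoc]
      _ = NormedSpace.exp (t • a) * a * z * NormedSpace.exp ((1 - t) • a)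
          + NormedSpace.exp (t • a) * z * ((-1 : ℝ) • (NormedSpace.exp ((1 - t) • a) * a)) := by
          rw [e1]
          simp only [neg_one_smul, mul_neg, ← sub_eq_add_neg, mul_assoc, e2]
          simp [smul_mul_assoc, mul_smul_comm, mul_assoc]
  -- continuity of the derivative
  have hcont : Continuous fun t : ℝ => I • (NormedSpace.exp (t • a) * c * NormedSpace.exp ((1 - t) • a)) := by
    let +nondep : NormedAlgebra ℚ (H →L[ℂ] H) := .restrictScalars ℚ ℂ _
    have h1 : Continuous fun t : ℝ => NormedSpace.exp (t • a) :=
      exp_continuous.comp (by continuity)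
    have h2 : Continuous fun t : ℝ => NormedSpace.exp ((1 - t) • a) :=
      exp_continuous.comp (by continuity)
    exact ((h1.mul continuous_const).mul h2).const_smul I
  -- FTC
  have hftc : (∫ t in (0:ℝ)..1, I • (NormedSpace.exp (t • a) * c * NormedSpace.exp ((1 - t) • a))) = g 1 - g 0 :=
    intervalIntegral.integral_eq_sub_of_hasDerivAt (fun t _ => hderiv t)
      (hcont.intervalIntegrable 0 1)
  have hg1 : g 1 - g 0 = NormedSpace.exp a * z - z * NormedSpace.exp a := by
    simp [hg, NormedSpace.exp_zero]
  have key : NormedSpace.exp (I • x) * z - z * NormedSpace.exp (I • x) =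
      I • ∫ t in (0:ℝ)..1,
        NormedSpace.exp (((t : ℂ) * I) • x) * c * NormedSpace.exp ((((1 - t : ℝ) : ℂ) * I) • x) := by
    rw [← ha, ← hg1, ← hftc, intervalIntegral.integral_smul]
    congr 1
    refine intervalIntegral.integral_congr fun t _ => ?_
    rw [hF t]
  refine ⟨key, ?_⟩
  rw [key]
  rw [norm_smul, Complex.norm_I, one_mul]
  have hbound : ∀ t ∈ Set.uIoc (0:ℝ) 1,
      ‖NormedSpace.exp (((t : ℂ) * I) • x) * c * NormedSpace.exp ((((1 - t : ℝ) : ℂ) * I) • x)‖ ≤ ‖c‖ := by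
    intro t _
    rw [hF t]
    calc ‖NormedSpace.exp (t • a) * c * NormedSpace.exp ((1 - t) • a)‖
        ≤ ‖NormedSpace.exp (t • a) * c‖ * ‖NormedSpace.exp ((1 - t) • a)‖ := norm_mul_le _ _
      _ ≤ ‖NormedSpace.exp (t • a)‖ * ‖c‖ * ‖NormedSpace.exp ((1 - t) • a)‖ := by
          gcongr; exact norm_mul_le _ _
      _ ≤ 1 * ‖c‖ * 1 := by
          gcongr
          · exact aux_exp_norm_le_one hx t
          · exact aux_exp_norm_le_one hx (1 - t)
      _ = ‖c‖ := by ring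
  calc ‖∫ t in (0:ℝ)..1,
        NormedSpace.exp (((t : ℂ) * I) • x) * c * NormedSpace.exp ((((1 - t : ℝ) : ℂ) * I) • x)‖
      ≤ ‖c‖ * |(1:ℝ) - 0| :=
        intervalIntegral.norm_integral_le_of_norm_le_const hbound
    _ = ‖c‖ := by simp
end

section
/- For q ∈ ℝ³ with q ≠ 0 small, the integral I(q) = ∫_{|k|≤1} dk / (|k+q|² |k|²) diverges like |q|^{-1}: there exist constants 0 < c₁ ≤ c₂ such that c₁ |q|^{-1} ≤ I(q) ≤ c₂ |q|^{-1} for all sufficiently small |q|. -/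
open MeasureTheory
open Set Metric
open scoped ENNReal NNReal

noncomputable section CoulombAux

local notation "E3" => EuclideanSpace ℝ (Fin 3)

open Measure in
lemma lintegral_fun_norm_E3 (g : ℝ → ℝ≥0∞) (hg : Measurable g) :
    ∫⁻ x : E3, g ‖x‖ = 3 * volume (ball (0:E3) 1) *
      ∫⁻ y in Ioi (0:ℝ), ENNReal.ofReal (y ^ 2) * g y := by
  have hdim : Module.finrank ℝ E3 = 3 := finrank_euclideanSpace_fin
  have hg2 : Measurable fun p : (sphere (0:E3) 1) × (Ioi (0:ℝ)) => g ↑p.2 :=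
    hg.comp (measurable_subtype_coe.comp measurable_snd)
  have hg3 : Measurable fun y : Ioi (0:ℝ) => g ↑y := hg.comp measurable_subtype_coe
  have h1 : ∫⁻ x : E3, g ‖x‖
      = ∫⁻ x : ({(0:E3)}ᶜ : Set E3), g ‖(x : E3)‖ ∂(Measure.comap Subtype.val volume) := by
    have := lintegral_subtype_comap (μ := (volume : Measure E3))
      (measurableSet_singleton (0:E3)).compl (fun x => g ‖x‖)
    rw [MeasureTheory.restrict_compl_singleton] at this
    exact this.symm
  have h2 : ∫⁻ x : ({(0:E3)}ᶜ : Set E3), g ‖(x : E3)‖ ∂(Measure.comap Subtype.val volume)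
      = ∫⁻ p : sphere (0:E3) 1 × Ioi (0:ℝ), g p.2
        ∂((volume : Measure E3).toSphere.prod
            (volumeIoiPow (Module.finrank ℝ E3 - 1))) :=
    by
      have := (measurePreserving_homeomorphUnitSphereProd (volume : Measure E3)).lintegral_comp_emb
        (Homeomorph.measurableEmbedding _) (fun p => g p.2)
      simpa using this
  have h3 : ∫⁻ p : sphere (0:E3) 1 × Ioi (0:ℝ), g p.2
        ∂((volume : Measure E3).toSphere.prod
            (volumeIoiPow (Module.finrank ℝ E3 - 1)))
      = (volume : Measure E3).toSphere univ *
          ∫⁻ y : Ioi (0:ℝ), g y ∂(volumeIoiPow (Module.finrank ℝ E3 - 1)) := by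
    have := lintegral_prod (μ := (volume : Measure E3).toSphere)
      (ν := volumeIoiPow (Module.finrank ℝ E3 - 1))
      (fun p : (sphere (0:E3) 1) × (Ioi (0:ℝ)) => g ↑p.2) hg2.aemeasurable
    rw [this]
    show ∫⁻ _x : sphere (0:E3) 1, (∫⁻ y : Ioi (0:ℝ), g ↑y
      ∂(volumeIoiPow (Module.finrank ℝ E3 - 1))) ∂(volume : Measure E3).toSphere = _
    rw [lintegral_const, mul_comm]
  have h4 : ∫⁻ y : Ioi (0:ℝ), g y ∂(volumeIoiPow (Module.finrank ℝ E3 - 1))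
      = ∫⁻ y in Ioi (0:ℝ), ENNReal.ofReal (y ^ 2) * g y := by
    rw [hdim]
    have h4a : ∫⁻ y : Ioi (0:ℝ), g y ∂(volumeIoiPow 2)
        = ∫⁻ a : Ioi (0:ℝ), ((fun r : Ioi (0:ℝ) => ENNReal.ofReal ((r:ℝ) ^ 2)) *
            fun y : Ioi (0:ℝ) => g ↑y) a ∂(Measure.comap Subtype.val volume) :=
      lintegral_withDensity_eq_lintegral_mul _
        ((measurable_subtype_coe.pow_const 2).ennreal_ofReal) hg3
    have h4b : ∫⁻ a : Ioi (0:ℝ), ((fun r : Ioi (0:ℝ) => ENNReal.ofReal ((r:ℝ) ^ 2)) *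
            fun y : Ioi (0:ℝ) => g ↑y) a ∂(Measure.comap Subtype.val volume)
        = ∫⁻ y in Ioi (0:ℝ), ENNReal.ofReal (y ^ 2) * g y :=
      lintegral_subtype_comap measurableSet_Ioi (fun y => ENNReal.ofReal (y ^ 2) * g y)
    exact h4a.trans h4b
  rw [h1, h2, h3, h4, toSphere_apply_univ, hdim]
  norm_num

lemma lint_ball_inv_sq (r : ℝ) (hr : 0 < r) :
    ∫⁻ k in ball (0:E3) r, ENNReal.ofReal (1 / ‖k‖ ^ 2)
      = 3 * volume (ball (0:E3) 1) * ENNReal.ofReal r := by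
  set g : ℝ → ℝ≥0∞ := fun y => (Iio r).indicator (fun y => ENNReal.ofReal (1 / y ^ 2)) y
    with hgdef
  have hgm : Measurable g := Measurable.indicator (by fun_prop) measurableSet_Iio
  have key : ∫⁻ k in ball (0:E3) r, ENNReal.ofReal (1 / ‖k‖ ^ 2) = ∫⁻ x : E3, g ‖x‖ := by
    rw [← lintegral_indicator measurableSet_ball]
    congr 1; funext x
    by_cases h : ‖x‖ < r
    · simp [g, Set.indicator, mem_ball_zero_iff, h]
    · simp [g, Set.indicator, mem_ball_zero_iff, h]
  rw [key, lintegral_fun_norm_E3 g hgm]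
  congr 1
  calc ∫⁻ y in Ioi (0:ℝ), ENNReal.ofReal (y ^ 2) * g y
      = ∫⁻ y in Ioi (0:ℝ), (Iio r).indicator (fun _ => 1) y := by
        refine setLIntegral_congr_fun measurableSet_Ioi (fun y hy => ?_)
        by_cases h : y < r
        · have hy0 : (0:ℝ) < y := hy
          simp only [g, Set.indicator, mem_Iio, h, if_true, ← ENNReal.ofReal_mul (sq_nonneg y)]
          rw [mul_one_div, div_self (by positivity), ENNReal.ofReal_one]
        · simp [g, Set.indicator, h]
    _ = ENNReal.ofReal r := by
        rw [lintegral_indicator measurableSet_Iio, Measure.restrict_restrict measurableSet_Iio,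
          setLIntegral_one, Iio_inter_Ioi, Real.volume_Ioo, sub_zero]

lemma lint_compl_inv_four (r : ℝ) (hr : 0 < r) :
    ∫⁻ k in (ball (0:E3) r)ᶜ, ENNReal.ofReal (1 / ‖k‖ ^ 4)
      = 3 * volume (ball (0:E3) 1) * ENNReal.ofReal (1 / r) := by
  set g : ℝ → ℝ≥0∞ := fun y => (Ici r).indicator (fun y => ENNReal.ofReal (1 / y ^ 4)) y
    with hgdef
  have hgm : Measurable g := Measurable.indicator (by fun_prop) measurableSet_Ici
  have key : ∫⁻ k in (ball (0:E3) r)ᶜ, ENNReal.ofReal (1 / ‖k‖ ^ 4) = ∫⁻ x : E3, g ‖x‖ := by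
    rw [← lintegral_indicator measurableSet_ball.compl]
    congr 1; funext x
    by_cases h : r ≤ ‖x‖
    · simp [g, Set.indicator, mem_ball_zero_iff, h, not_lt.mpr h]
    · simp [g, Set.indicator, mem_ball_zero_iff, h, not_le.mp h]
  rw [key, lintegral_fun_norm_E3 g hgm]
  congr 1
  calc ∫⁻ y in Ioi (0:ℝ), ENNReal.ofReal (y ^ 2) * g y
      = ∫⁻ y in Ioi (0:ℝ), (Ici r).indicator (fun y => ENNReal.ofReal (1 / y ^ 2)) y := by
        refine setLIntegral_congr_fun measurableSet_Ioi (fun y hy => ?_)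
        have hy0 : (0:ℝ) < y := hy
        by_cases h : r ≤ y
        · simp only [g, Set.indicator, mem_Ici, h, if_true,
            ← ENNReal.ofReal_mul (sq_nonneg y)]
          congr 1
          field_simp
        · simp [g, Set.indicator, mem_Ici, h]
    _ = ∫⁻ y in Ici r, ENNReal.ofReal (1 / y ^ 2) := by
        have hs : Ici r ∩ Ioi 0 = Ici r := by
          rw [inter_eq_left]; exact fun y hy => hr.trans_le hy
        rw [lintegral_indicator measurableSet_Ici, Measure.restrict_restrict measurableSet_Ici,
          hs]
    _ = ∫⁻ y in Ioi r, ENNReal.ofReal (1 / y ^ 2) := by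
        rw [← Measure.restrict_congr_set Ioi_ae_eq_Ici]
    _ = ∫⁻ y in Ioi r, ENNReal.ofReal (y ^ (-2 : ℝ)) := by
        refine setLIntegral_congr_fun measurableSet_Ioi (fun y hy => ?_)
        have hy0 : (0:ℝ) < y := hr.trans hy
        congr 1
        rw [Real.rpow_neg hy0.le, one_div, show (2:ℝ) = ((2:ℕ):ℝ) by norm_num,
          Real.rpow_natCast]
    _ = ENNReal.ofReal (∫ y in Ioi r, y ^ (-2 : ℝ)) := by
        rw [ofReal_integral_eq_lintegral_ofReal
          (integrableOn_Ioi_rpow_of_lt (by norm_num) hr)]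
        filter_upwards [ae_restrict_mem measurableSet_Ioi] with y hy
        exact Real.rpow_nonneg (hr.trans hy).le _
    _ = ENNReal.ofReal (1 / r) := by
        rw [integral_Ioi_rpow_of_lt (by norm_num) hr]
        norm_num
        rw [Real.rpow_neg_one]

lemma lint_ball_c (c r : ℝ) (hc : 0 ≤ c) (hr : 0 < r) :
    ∫⁻ k in ball (0:E3) r, ENNReal.ofReal (c * (1 / ‖k‖ ^ 2))
      = ENNReal.ofReal c * (3 * volume (ball (0:E3) 1) * ENNReal.ofReal r) := by
  simp_rw [ENNReal.ofReal_mul hc]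
  rw [lintegral_const_mul _ (by fun_prop), lint_ball_inv_sq r hr]

lemma lint_compl_c (c r : ℝ) (hc : 0 ≤ c) (hr : 0 < r) :
    ∫⁻ k in (ball (0:E3) r)ᶜ, ENNReal.ofReal (c * (1 / ‖k‖ ^ 4))
      = ENNReal.ofReal c * (3 * volume (ball (0:E3) 1) * ENNReal.ofReal (1 / r)) := by
  simp_rw [ENNReal.ofReal_mul hc]
  rw [lintegral_const_mul _ (by fun_prop), lint_compl_inv_four r hr]

set_option maxHeartbeats 1000000 in
/-- The integral `I(q) = ∫_{|k|≤1} dk / (|k+q|² |k|²)` over the unit ball in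
`ℝ³` diverges like `|q|⁻¹` as `q → 0`: there are constants `0 < c₁ ≤ c₂` such
that `c₁ |q|⁻¹ ≤ I(q) ≤ c₂ |q|⁻¹` for all sufficiently small nonzero `q`. -/
theorem coulomb_like_integral_divergence :
    ∃ c₁ c₂ ε : ℝ, 0 < c₁ ∧ c₁ ≤ c₂ ∧ 0 < ε ∧
      ∀ q : EuclideanSpace ℝ (Fin 3), q ≠ 0 → ‖q‖ < ε →
        c₁ / ‖q‖ ≤ (∫ k in Metric.ball (0 : EuclideanSpace ℝ (Fin 3)) 1,
            1 / (‖k + q‖ ^ 2 * ‖k‖ ^ 2)) ∧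
        (∫ k in Metric.ball (0 : EuclideanSpace ℝ (Fin 3)) 1,
            1 / (‖k + q‖ ^ 2 * ‖k‖ ^ 2)) ≤ c₂ / ‖q‖ := by
  classical
  have hB0 : volume (ball (0:E3) 1) ≠ 0 := (measure_ball_pos _ _ one_pos).ne'
  have hBt : volume (ball (0:E3) 1) ≠ ⊤ := measure_ball_lt_top.ne
  set b : ℝ := (volume (ball (0:E3) 1)).toReal with hbdef
  have hb : 0 < b := ENNReal.toReal_pos hB0 hBt
  have hBb : ENNReal.ofReal b = volume (ball (0:E3) 1) := ENNReal.ofReal_toReal hBt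
  refine ⟨2*b/3, 18*b, 1, by positivity, by nlinarith, one_pos, ?_⟩
  intro q hq0 hqe
  have hq : 0 < ‖q‖ := norm_pos_iff.mpr hq0
  set s : ℝ := ‖q‖/2 with hsdef
  have hs0 : 0 < s := by positivity
  set f : E3 → ℝ := fun k => 1 / (‖k + q‖ ^ 2 * ‖k‖ ^ 2) with hfdef
  have hfm : Measurable f := by fun_prop
  have hf0 : ∀ k, 0 ≤ f k := fun k => by positivity
  have hI : (∫ k in ball (0:E3) 1, f k)
      = (∫⁻ k in ball (0:E3) 1, ENNReal.ofReal (f k)).toReal := by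
    rw [integral_eq_lintegral_of_nonneg_ae (ae_of_all _ hf0)
      hfm.aestronglyMeasurable]
  set J := ∫⁻ k in ball (0:E3) 1, ENNReal.ofReal (f k) with hJdef
  -- the four comparison functions
  set c4 : ℝ := 4 / ‖q‖ ^ 2 with hc4
  have hc4nn : 0 ≤ c4 := by positivity
  set T1 : E3 → ℝ≥0∞ := fun k =>
    (ball (0:E3) s).indicator (fun k => ENNReal.ofReal (c4 * (1 / ‖k‖ ^ 2))) k with hT1
  set T2 : E3 → ℝ≥0∞ := fun k =>
    (ball (-q) s).indicator (fun k => ENNReal.ofReal (c4 * (1 / ‖k + q‖ ^ 2))) k with hT2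
  set T3 : E3 → ℝ≥0∞ := fun k =>
    ((ball (0:E3) s)ᶜ).indicator (fun k => ENNReal.ofReal ((1/2) * (1 / ‖k‖ ^ 4))) k with hT3
  set T4 : E3 → ℝ≥0∞ := fun k =>
    ((ball (-q) s)ᶜ).indicator (fun k => ENNReal.ofReal ((1/2) * (1 / ‖k + q‖ ^ 4))) k with hT4
  -- membership translations
  have hmem2 : ∀ k : E3, k ∈ ball (-q) s ↔ ‖k + q‖ < s := by
    intro k
    rw [mem_ball, dist_eq_norm, sub_neg_eq_add]
  have htri : ∀ k : E3, ‖q‖ ≤ ‖k + q‖ + ‖k‖ := by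
    intro k
    have h := norm_sub_le (k + q) k
    simpa using h
  -- pointwise comparison
  have hpt : ∀ k, ENNReal.ofReal (f k) ≤ T1 k + T2 k + T3 k + T4 k := by
    intro k
    by_cases h1 : ‖k‖ < s
    · have hk1 : k ∈ ball (0:E3) s := mem_ball_zero_iff.mpr h1
      have hkq : s < ‖k + q‖ := by
        have := htri k
        simp only [hsdef] at h1 ⊢
        linarith
      have hle : f k ≤ c4 * (1 / ‖k‖ ^ 2) := by
        rcases eq_or_lt_of_le (norm_nonneg k) with h0 | h0
        · have : ‖k‖ = 0 := h0.symm
          simp [hfdef, this]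
        · have hkq2 : s ^ 2 ≤ ‖k + q‖ ^ 2 := by nlinarith
          have : 1 / (‖k + q‖ ^ 2 * ‖k‖ ^ 2) ≤ 1 / (s ^ 2 * ‖k‖ ^ 2) := by
            apply one_div_le_one_div_of_le (by positivity)
            exact mul_le_mul_of_nonneg_right hkq2 (sq_nonneg _)
          calc f k ≤ 1 / (s ^ 2 * ‖k‖ ^ 2) := this
            _ = c4 * (1 / ‖k‖ ^ 2) := by
                rw [hc4, hsdef]; field_simp; ring
      calc ENNReal.ofReal (f k) ≤ T1 k := by
            rw [hT1]; simp only [indicator_of_mem hk1]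
            exact ENNReal.ofReal_le_ofReal hle
        _ ≤ T1 k + T2 k + T3 k + T4 k :=
            le_add_right (le_add_right (self_le_add_right _ _))
    · by_cases h2 : ‖k + q‖ < s
      · have hk2 : k ∈ ball (-q) s := (hmem2 k).mpr h2
        have hknorm : s < ‖k‖ := by
          have := htri k
          simp only [hsdef] at h2 ⊢
          linarith
        have hle : f k ≤ c4 * (1 / ‖k + q‖ ^ 2) := by
          rcases eq_or_lt_of_le (norm_nonneg (k + q)) with h0 | h0
          · have hz : ‖k + q‖ = 0 := h0.symm
            simp [hfdef, hz]
          · have : 1 / (‖k + q‖ ^ 2 * ‖k‖ ^ 2) ≤ 1 / (‖k + q‖ ^ 2 * s ^ 2) := by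
              apply one_div_le_one_div_of_le (by positivity)
              have hkk : s ^ 2 ≤ ‖k‖ ^ 2 := by nlinarith
              exact mul_le_mul_of_nonneg_left hkk (sq_nonneg _)
            calc f k ≤ 1 / (‖k + q‖ ^ 2 * s ^ 2) := this
              _ = c4 * (1 / ‖k + q‖ ^ 2) := by
                  rw [hc4, hsdef]; field_simp; ring
        calc ENNReal.ofReal (f k) ≤ T2 k := by
              rw [hT2]; simp only [indicator_of_mem hk2]
              exact ENNReal.ofReal_le_ofReal hle
          _ ≤ T1 k + T2 k + T3 k + T4 k := by
              calc T2 k ≤ T1 k + T2 k := le_add_self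
                _ ≤ T1 k + T2 k + T3 k + T4 k :=
                    le_add_right (self_le_add_right _ _)
      · have hk3 : k ∈ (ball (0:E3) s)ᶜ := by
          simp [mem_ball_zero_iff, h1]
        have hk4 : k ∈ (ball (-q) s)ᶜ := by
          intro hmem
          exact h2 ((hmem2 k).mp hmem)
        have ha : (0:ℝ) < ‖k‖ := hs0.trans_le (not_lt.mp h1)
        have hb' : (0:ℝ) < ‖k + q‖ := hs0.trans_le (not_lt.mp h2)
        have hle : f k ≤ (1/2) * (1 / ‖k‖ ^ 4) + (1/2) * (1 / ‖k + q‖ ^ 4) := by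
          have e1 : f k = (1 / ‖k‖ ^ 2) * (1 / ‖k + q‖ ^ 2) := by
            rw [hfdef]; ring
          have e2 : (1:ℝ) / ‖k‖ ^ 4 = (1 / ‖k‖ ^ 2) ^ 2 := by ring
          have e3 : (1:ℝ) / ‖k + q‖ ^ 4 = (1 / ‖k + q‖ ^ 2) ^ 2 := by ring
          rw [e1, e2, e3]
          nlinarith [sq_nonneg (1 / ‖k‖ ^ 2 - 1 / ‖k + q‖ ^ 2)]
        have hsplit : ENNReal.ofReal (f k)
            ≤ ENNReal.ofReal ((1/2) * (1 / ‖k‖ ^ 4)) + ENNReal.ofReal ((1/2) * (1 / ‖k + q‖ ^ 4)) := by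
          refine le_trans (ENNReal.ofReal_le_ofReal hle) ?_
          rw [ENNReal.ofReal_add (by positivity) (by positivity)]
        calc ENNReal.ofReal (f k) ≤ T3 k + T4 k := by
              rw [hT3, hT4]
              simp only [indicator_of_mem hk3, indicator_of_mem hk4]
              exact hsplit
          _ ≤ T1 k + T2 k + T3 k + T4 k := by
              rw [add_assoc]
              exact le_add_self
  -- measurability of the pieces
  have hT1m : Measurable T1 := Measurable.indicator (by fun_prop) measurableSet_ball
  have hT2m : Measurable T2 := Measurable.indicator (by fun_prop) measurableSet_ball
  have hT3m : Measurable T3 := Measurable.indicator (by fun_prop) measurableSet_ball.compl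
  have hT4m : Measurable T4 := Measurable.indicator (by fun_prop) measurableSet_ball.compl
  -- values of the four integrals
  have hX1 : ∫⁻ k, T1 k
      = ENNReal.ofReal c4 * (3 * volume (ball (0:E3) 1) * ENNReal.ofReal s) := by
    rw [hT1, lintegral_indicator measurableSet_ball]
    exact lint_ball_c c4 s hc4nn hs0
  have hshift2 : ∀ k : E3, T2 k = T1 (k + q) := by
    intro k
    rw [hT1, hT2]
    beta_reduce
    by_cases h : ‖k + q‖ < s
    · rw [indicator_of_mem ((hmem2 k).mpr h), indicator_of_mem (mem_ball_zero_iff.mpr h)]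
    · rw [indicator_of_notMem (fun hm => h ((hmem2 k).mp hm)),
        indicator_of_notMem (fun hm => h (mem_ball_zero_iff.mp hm))]
  have hX2 : ∫⁻ k, T2 k
      = ENNReal.ofReal c4 * (3 * volume (ball (0:E3) 1) * ENNReal.ofReal s) := by
    calc ∫⁻ k, T2 k = ∫⁻ k, T1 (k + q) := lintegral_congr hshift2
      _ = ∫⁻ k, T1 k := lintegral_add_right_eq_self T1 q
      _ = _ := hX1
  have hX3 : ∫⁻ k, T3 k
      = ENNReal.ofReal (1/2) * (3 * volume (ball (0:E3) 1) * ENNReal.ofReal (1/s)) := by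
    rw [hT3, lintegral_indicator measurableSet_ball.compl]
    exact lint_compl_c (1/2) s (by norm_num) hs0
  have hshift4 : ∀ k : E3, T4 k = T3 (k + q) := by
    intro k
    rw [hT3, hT4]
    beta_reduce
    by_cases h : ‖k + q‖ < s
    · rw [indicator_of_notMem (not_not_intro ((hmem2 k).mpr h)),
        indicator_of_notMem (not_not_intro (mem_ball_zero_iff.mpr h))]
    · rw [indicator_of_mem (s := (ball (-q) s)ᶜ) (fun hm => h ((hmem2 k).mp hm)),
        indicator_of_mem (s := (ball (0:E3) s)ᶜ) (fun hm => h (mem_ball_zero_iff.mp hm))]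
  have hX4 : ∫⁻ k, T4 k
      = ENNReal.ofReal (1/2) * (3 * volume (ball (0:E3) 1) * ENNReal.ofReal (1/s)) := by
    calc ∫⁻ k, T4 k = ∫⁻ k, T3 (k + q) := lintegral_congr hshift4
      _ = ∫⁻ k, T3 k := lintegral_add_right_eq_self T3 q
      _ = _ := hX3
  -- combine ofReal products
  have hcomb : ∀ (c r : ℝ), 0 ≤ c → 0 ≤ r →
      ENNReal.ofReal c * (3 * volume (ball (0:E3) 1) * ENNReal.ofReal r)
        = ENNReal.ofReal (c * (3 * b * r)) := by
    intro c r hc hr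
    rw [← hBb, show (3:ℝ≥0∞) = ENNReal.ofReal (3:ℝ) by norm_num,
      ← ENNReal.ofReal_mul (by norm_num : (0:ℝ) ≤ 3),
      ← ENNReal.ofReal_mul (by positivity : (0:ℝ) ≤ 3 * b),
      ← ENNReal.ofReal_mul hc]
  -- upper bound
  have hJle : J ≤ ∫⁻ k, (T1 k + T2 k + T3 k + T4 k) := by
    calc J ≤ ∫⁻ k in ball (0:E3) 1, (T1 k + T2 k + T3 k + T4 k) := lintegral_mono hpt
      _ ≤ ∫⁻ k, (T1 k + T2 k + T3 k + T4 k) := setLIntegral_le_lintegral _ _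
  have hsum : ∫⁻ k, (T1 k + T2 k + T3 k + T4 k)
      = (∫⁻ k, T1 k) + (∫⁻ k, T2 k) + (∫⁻ k, T3 k) + (∫⁻ k, T4 k) := by
    rw [lintegral_add_right _ hT4m, lintegral_add_right _ hT3m, lintegral_add_right _ hT2m]
  have hUofReal : (∫⁻ k, T1 k) + (∫⁻ k, T2 k) + (∫⁻ k, T3 k) + (∫⁻ k, T4 k)
      = ENNReal.ofReal (c4 * (3*b*s) + c4 * (3*b*s)
          + (1/2) * (3*b*(1/s)) + (1/2) * (3*b*(1/s))) := by
    rw [hX1, hX2, hX3, hX4, hcomb c4 s hc4nn hs0.le,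
      hcomb (1/2) (1/s) (by norm_num) (by positivity),
      ← ENNReal.ofReal_add (by positivity) (by positivity),
      ← ENNReal.ofReal_add (by positivity) (by positivity),
      ← ENNReal.ofReal_add (by positivity) (by positivity)]
  have hJU : J ≤ ENNReal.ofReal (18*b/‖q‖) := by
    refine (hJle.trans (le_of_eq (hsum.trans hUofReal))).trans
      (ENNReal.ofReal_le_ofReal (le_of_eq ?_))
    rw [hc4, hsdef]
    field_simp
    ring
  have hJtop : J ≠ ⊤ := ne_top_of_le_ne_top ENNReal.ofReal_ne_top hJU
  have hup : (∫ k in ball (0:E3) 1, f k) ≤ 18*b/‖q‖ := by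
    rw [hI]
    calc J.toReal ≤ (ENNReal.ofReal (18*b/‖q‖)).toReal :=
          ENNReal.toReal_mono ENNReal.ofReal_ne_top hJU
      _ = 18*b/‖q‖ := ENNReal.toReal_ofReal (by positivity)
  -- lower bound
  have hlow1 : ∀ k ∈ ball (0:E3) s,
      ENNReal.ofReal ((4/9)*(1/‖q‖^2) * (1/‖k‖^2)) ≤ ENNReal.ofReal (f k) := by
    intro k hk
    apply ENNReal.ofReal_le_ofReal
    have hkn : ‖k‖ < s := mem_ball_zero_iff.mp hk
    rcases eq_or_lt_of_le (norm_nonneg k) with h0 | h0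
    · simp [hfdef, ← h0]
    · have hub : ‖k + q‖ ≤ (3/2)*‖q‖ := by
        have h2 := norm_add_le k q
        simp only [hsdef] at hkn
        linarith
      have hsq : ‖k+q‖^2 ≤ (9/4)*‖q‖^2 := by nlinarith [norm_nonneg (k + q)]
      have h1' : ‖k+q‖^2*‖k‖^2 ≤ (9/4)*‖q‖^2*‖k‖^2 :=
        mul_le_mul_of_nonneg_right hsq (sq_nonneg _)
      have h2' : (0:ℝ) < ‖k+q‖^2*‖k‖^2 ∨ True := Or.inr trivial
      rw [hfdef]
      calc (4/9)*(1/‖q‖^2)*(1/‖k‖^2) = 1/((9/4)*‖q‖^2*‖k‖^2) := by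
            field_simp
        _ ≤ 1/(‖k+q‖^2*‖k‖^2) := by
            apply one_div_le_one_div_of_le ?_ h1'
            have hkqpos : (0:ℝ) < ‖k + q‖ := by
              have h3 := htri k
              simp only [hsdef] at hkn
              linarith
            positivity
  have hlowJ : ENNReal.ofReal ((4/9)*(1/‖q‖^2)) * (3 * volume (ball (0:E3) 1) * ENNReal.ofReal s)
      ≤ J := by
    rw [← lint_ball_c ((4/9)*(1/‖q‖^2)) s (by positivity) hs0]
    calc ∫⁻ k in ball (0:E3) s, ENNReal.ofReal ((4/9)*(1/‖q‖^2) * (1/‖k‖^2))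
        ≤ ∫⁻ k in ball (0:E3) s, ENNReal.ofReal (f k) :=
          setLIntegral_mono hfm.ennreal_ofReal hlow1
      _ ≤ J := lintegral_mono_set (ball_subset_ball (by simp only [hsdef]; linarith))
  have hlowval : (2*b/3)/‖q‖ ≤ (∫ k in ball (0:E3) 1, f k) := by
    rw [hI]
    have h1 := ENNReal.toReal_mono hJtop hlowJ
    refine le_trans (le_of_eq ?_) h1
    rw [hcomb ((4/9)*(1/‖q‖^2)) s (by positivity) hs0.le,
      ENNReal.toReal_ofReal (by positivity), hsdef]
    field_simp
    ring
  exact ⟨hlowval, hup⟩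

end CoulombAux
end
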